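/- Let z, z' : Fin n → ℝ be monotone nondecreasing sequences, and let P be any n × n matrix with nonnegative entries whose every row sum and every column sum equals 1/n (i.e., P is 1/n times a doubly stochastic matrix). Then Σ_{i,j} P_{ij} |z_i − z'_j| ≥ (1/n) Σ_i |z_i − z'_i|. Consequently, the 1-dimensional Earth Mover's Distance between two uniformly weighted point sets of equal size n equals (1/n) Σ_i |z_{(i)} − z'_{(i)}|, the average distance between sorted matched pairs. -/

import Mathlib

open MeasureTheory Set

noncomputable def chi (a t : ℝ) : ℝ := if a ≤ t then 1 else 0

lemma chi_abs (a b t : ℝ) :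
    |chi a t - chi b t| = Set.indicator (Set.Ico (min a b) (max a b)) (fun _ => (1:ℝ)) t := by
  unfold chi
  rcases le_or_gt a t with ha | ha <;> rcases le_or_gt b t with hb | hb
  · rw [if_pos ha, if_pos hb, Set.indicator_of_notMem (by simp [Set.mem_Ico, not_lt, ha, hb])]
    simp
  · rw [if_pos ha, if_neg (not_le.2 hb),
      Set.indicator_of_mem (by simp [Set.mem_Ico, min_le_iff, lt_max_iff, ha, hb])]
    simp
  · rw [if_neg (not_le.2 ha), if_pos hb,
      Set.indicator_of_mem (by simp [Set.mem_Ico, min_le_iff, lt_max_iff, ha, hb])]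
    simp
  · rw [if_neg (not_le.2 ha), if_neg (not_le.2 hb),
      Set.indicator_of_notMem (by simp [Set.mem_Ico, min_le_iff, not_le, ha, hb])]
    simp

lemma chi_integrable (a b : ℝ) : Integrable (fun t => |chi a t - chi b t|) := by
  have : (fun t => |chi a t - chi b t|)
      = Set.indicator (Set.Ico (min a b) (max a b)) (fun _ => (1:ℝ)) := funext (chi_abs a b)
  rw [this]
  exact (integrable_indicator_iff measurableSet_Ico).2
    (integrableOn_const (by simp [Real.volume_Ico]))

lemma chi_integral (a b : ℝ) : ∫ t, |chi a t - chi b t| = |a - b| := by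
  have : (fun t => |chi a t - chi b t|)
      = Set.indicator (Set.Ico (min a b) (max a b)) (fun _ => (1:ℝ)) := funext (chi_abs a b)
  rw [this, integral_indicator measurableSet_Ico]
  simp [Real.volume_Ico, ENNReal.toReal_ofReal, sub_nonneg.2 (min_le_max (a := a) (b := b))]
  rw [max_sub_min_eq_abs a b, abs_sub_comm]

lemma sum_abs_eq_abs_sum {n : ℕ} (f : Fin n → ℝ)
    (h : (∀ i, 0 ≤ f i) ∨ (∀ i, f i ≤ 0)) : ∑ i, |f i| = |∑ i, f i| := by
  rcases h with h | h
  · rw [abs_of_nonneg (Finset.sum_nonneg fun i _ => h i)]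
    exact Finset.sum_congr rfl fun i _ => abs_of_nonneg (h i)
  · rw [abs_of_nonpos (Finset.sum_nonpos fun i _ => h i), ← Finset.sum_neg_distrib]
    exact Finset.sum_congr rfl fun i _ => abs_of_nonpos (h i)

lemma chi_sign {n : ℕ} (z z' : Fin n → ℝ) (hz : Monotone z) (hz' : Monotone z') (t : ℝ) :
    (∀ i, 0 ≤ chi (z i) t - chi (z' i) t) ∨ (∀ i, chi (z i) t - chi (z' i) t ≤ 0) := by
  have hneg : ∀ a b : ℝ, chi a t - chi b t < 0 → t < a ∧ b ≤ t := by
    intro a b h; unfold chi at h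
    split_ifs at h with h1 h2 h3 <;> (try push_neg at *) <;>
      first | exact ⟨by assumption, by assumption⟩ | linarith
  have hpos : ∀ a b : ℝ, 0 < chi a t - chi b t → a ≤ t ∧ t < b := by
    intro a b h; unfold chi at h
    split_ifs at h with h1 h2 h3 <;> (try push_neg at *) <;>
      first | exact ⟨by assumption, by assumption⟩ | linarith
  by_contra hc
  push_neg at hc
  obtain ⟨⟨i, hi⟩, ⟨j, hj⟩⟩ := hc
  obtain ⟨hi1, hi2⟩ := hneg _ _ hi
  obtain ⟨hj1, hj2⟩ := hpos _ _ hj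
  rcases le_total i j with hij | hij
  · exact absurd ((hz hij).trans hj1) (not_le.2 hi1)
  · exact absurd ((hz' hij).trans hi2) (not_le.2 hj2)

lemma pointwise_key {n : ℕ} (z z' : Fin n → ℝ) (hz : Monotone z) (hz' : Monotone z')
    (P : Matrix (Fin n) (Fin n) ℝ) (hP0 : ∀ i j, 0 ≤ P i j)
    (hProw : ∀ i, ∑ j, P i j = 1 / (n : ℝ)) (hPcol : ∀ j, ∑ i, P i j = 1 / (n : ℝ)) (t : ℝ) :
    (1 / (n : ℝ)) * ∑ i, |chi (z i) t - chi (z' i) t|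
      ≤ ∑ i, ∑ j, P i j * |chi (z i) t - chi (z' j) t| := by
  have hdiag : ∑ i, |chi (z i) t - chi (z' i) t|
      = |(∑ i, chi (z i) t) - ∑ i, chi (z' i) t| := by
    rw [sum_abs_eq_abs_sum _ (chi_sign z z' hz hz' t), Finset.sum_sub_distrib]
  have e1 : ∑ i, ∑ j, P i j * chi (z i) t = (1 / (n : ℝ)) * ∑ i, chi (z i) t := by
    simp only [← Finset.sum_mul, hProw]
    rw [← Finset.mul_sum]
  have e2 : ∑ i, ∑ j, P i j * chi (z' j) t = (1 / (n : ℝ)) * ∑ i, chi (z' i) t := by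
    rw [Finset.sum_comm]
    simp only [← Finset.sum_mul, hPcol]
    rw [← Finset.mul_sum]
  have hdouble : ∑ i, ∑ j, P i j * (chi (z i) t - chi (z' j) t)
      = (1 / (n : ℝ)) * ((∑ i, chi (z i) t) - ∑ i, chi (z' i) t) := by
    simp only [mul_sub, Finset.sum_sub_distrib, e1, e2]
  have htri : |∑ i, ∑ j, P i j * (chi (z i) t - chi (z' j) t)|
      ≤ ∑ i, ∑ j, P i j * |chi (z i) t - chi (z' j) t| := by
    refine (Finset.abs_sum_le_sum_abs _ _).trans (Finset.sum_le_sum fun i _ => ?_)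
    refine (Finset.abs_sum_le_sum_abs _ _).trans (Finset.sum_le_sum fun j _ => ?_)
    rw [abs_mul, abs_of_nonneg (hP0 i j)]
  calc (1 / (n : ℝ)) * ∑ i, |chi (z i) t - chi (z' i) t|
      = |(1 / (n : ℝ)) * ((∑ i, chi (z i) t) - ∑ i, chi (z' i) t)| := by
        rw [hdiag, abs_mul, abs_of_nonneg (by positivity : (0:ℝ) ≤ 1 / (n:ℝ))]
    _ = |∑ i, ∑ j, P i j * (chi (z i) t - chi (z' j) t)| := by rw [hdouble]
    _ ≤ _ := htri

/-- For monotone nondecreasing sequences `z, z' : Fin n → ℝ` and any matrix `P`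
with nonnegative entries whose row sums and column sums all equal `1/n`, the transport cost
`Σ_{i,j} P i j * |z i - z' j|` is at least `(1/n) Σ_i |z i - z' i|`; hence the 1-dimensional
EMD between two uniformly weighted point sets of equal size equals the average distance
between sorted matched pairs. -/
theorem oneDim_emd_sorted_matching {n : ℕ}
    (z z' : Fin n → ℝ) (hz : Monotone z) (hz' : Monotone z')
    (P : Matrix (Fin n) (Fin n) ℝ)
    (hP0 : ∀ i j, 0 ≤ P i j)
    (hProw : ∀ i, ∑ j, P i j = 1 / (n : ℝ)) (hPcol : ∀ j, ∑ i, P i j = 1 / (n : ℝ)) :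
    (1 / (n : ℝ)) * ∑ i, |z i - z' i| ≤ ∑ i, ∑ j, P i j * |z i - z' j| := by
  have hintL : Integrable (fun t => (1 / (n : ℝ)) * ∑ i, |chi (z i) t - chi (z' i) t|) :=
    (integrable_finset_sum Finset.univ fun i _ => chi_integrable (z i) (z' i)).const_mul _
  have hintR : Integrable (fun t => ∑ i, ∑ j, P i j * |chi (z i) t - chi (z' j) t|) :=
    integrable_finset_sum Finset.univ fun i _ =>
      integrable_finset_sum Finset.univ fun j _ => (chi_integrable (z i) (z' j)).const_mul _
  have eL : (1 / (n : ℝ)) * ∑ i, |z i - z' i|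
      = ∫ t, (1 / (n : ℝ)) * ∑ i, |chi (z i) t - chi (z' i) t| := by
    rw [MeasureTheory.integral_const_mul,
      MeasureTheory.integral_finset_sum Finset.univ fun i _ => chi_integrable (z i) (z' i)]
    simp only [chi_integral]
  have eR : ∑ i, ∑ j, P i j * |z i - z' j|
      = ∫ t, ∑ i, ∑ j, P i j * |chi (z i) t - chi (z' j) t| := by
    rw [MeasureTheory.integral_finset_sum Finset.univ fun i _ =>
      integrable_finset_sum Finset.univ fun j _ => (chi_integrable (z i) (z' j)).const_mul (P i j)]
    refine Finset.sum_congr rfl fun i _ => ?_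
    rw [MeasureTheory.integral_finset_sum Finset.univ fun j _ =>
      (chi_integrable (z i) (z' j)).const_mul (P i j)]
    refine Finset.sum_congr rfl fun j _ => ?_
    rw [MeasureTheory.integral_const_mul, chi_integral]
  rw [eL, eR]
  exact MeasureTheory.integral_mono hintL hintR
    (pointwise_key z z' hz hz' P hP0 hProw hPcol)
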